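/- (Recovery of the Arjovsky–Bottou gradient identity, Eq. (13), under the optimal discriminator.) Let X be a measurable space, β a probability measure on X (p_data), θ₀ ∈ ℝ^d, P : ℝ^d → Measure X a family of probability measures with P θ₀ =: α (the generator family), and let r be an a.e.-representative with values in (0,1) of the Radon–Nikodym derivative dβ/d(α+β). Set ρ := (1/2)•(α+β). Assume: (i) β ≪ α, klDiv(β‖α) < ⊤, and log∘(1−r) is integrable with respect to β; (ii) there is a neighborhood U of θ₀ such that for all θ ∈ U, P θ ≪ ρ, klDiv(P θ‖ρ) < ⊤, and log∘r is integrable with respect to P θ; (iii) the function G̃(θ) := (1/2)·(klDiv(P θ‖β)).toReal − (JSD(P θ, β)).toReal is differentiable at θ₀; (iv) the function H(θ) := (klDiv((1/2)•P θ + (1/2)•β ‖ ρ)).toReal is differentiable at θ₀. Then F(θ) := −(1/2)∫ log(r x) d(P θ) − (1/2)∫ log(1−r x) dβ is differentiable at θ₀ and ∇F(θ₀) = ∇G̃(θ₀); i.e., the gradient of the negative GAN generator objective equals the gradient of ½KL(p_{g_θ}‖p_data) − JSD(p_{g_θ}‖p_data) at θ₀. -/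

import Mathlib

open MeasureTheory Real
open scoped ENNReal NNReal

open scoped Classical in
/-- Kullback-Leibler divergence of measures (Mathlib's definition). -/
noncomputable def klDiv {X : Type*} [MeasurableSpace X] (μ ν : Measure X) : ℝ≥0∞ :=
  if μ ≪ ν ∧ Integrable (llr μ ν) μ then ENNReal.ofReal (∫ x, llr μ ν x ∂μ) else ⊤

/-- Jensen-Shannon divergence of measures. -/
noncomputable def JSD {X : Type*} [MeasurableSpace X] (μ ν : Measure X) : ℝ≥0∞ :=
  (1 / 2) * klDiv μ ((1 / 2 : ℝ≥0∞) • μ + (1 / 2 : ℝ≥0∞) • ν) +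
    (1 / 2) * klDiv ν ((1 / 2 : ℝ≥0∞) • μ + (1 / 2 : ℝ≥0∞) • ν)

lemma aux_integral_llr_nonneg {X : Type*} [MeasurableSpace X] {μ ν : Measure X}
    [IsProbabilityMeasure μ] [IsProbabilityMeasure ν]
    (hμν : μ ≪ ν) (h : Integrable (llr μ ν) μ) :
    0 ≤ ∫ x, llr μ ν x ∂μ := by
  have hneg : Integrable (llr ν μ) μ := (h.neg.congr (neg_llr hμν))
  have hD : Integrable (fun x => (ν.rnDeriv μ x).toReal) μ := by
    refine integrable_toReal_of_lintegral_ne_top (Measure.measurable_rnDeriv ν μ).aemeasurable ?_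
    exact (Measure.lintegral_rnDeriv_lt_top ν μ).ne
  have hle : ∫ x, llr ν μ x ∂μ ≤ ∫ x, ((ν.rnDeriv μ x).toReal - 1) ∂μ := by
    refine integral_mono_ae hneg (hD.sub (integrable_const 1)) ?_
    filter_upwards [Measure.rnDeriv_pos' hμν, Measure.rnDeriv_lt_top ν μ] with x h1 h2
    have hpos : 0 < (ν.rnDeriv μ x).toReal := ENNReal.toReal_pos h1.ne' h2.ne
    simpa [llr] using Real.log_le_sub_one_of_pos hpos
  have hint1 : ∫ x, ((ν.rnDeriv μ x).toReal - 1) ∂μ ≤ 0 := by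
    rw [integral_sub hD (integrable_const 1), integral_const]
    simp only [measure_univ, probReal_univ, ENNReal.toReal_one, one_smul, smul_eq_mul]
    have : ∫ x, (ν.rnDeriv μ x).toReal ∂μ ≤ 1 := by
      rw [integral_toReal (Measure.measurable_rnDeriv ν μ).aemeasurable
        (Measure.rnDeriv_lt_top ν μ)]
      calc (∫⁻ x, ν.rnDeriv μ x ∂μ).toReal ≤ (ν Set.univ).toReal :=
            ENNReal.toReal_mono (measure_ne_top _ _) Measure.lintegral_rnDeriv_le
        _ = 1 := by simp
    linarith
  have : ∫ x, llr μ ν x ∂μ = - ∫ x, llr ν μ x ∂μ := by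
    have h2 : ∫ x, -llr μ ν x ∂μ = ∫ x, llr ν μ x ∂μ := integral_congr_ae (neg_llr hμν)
    rw [integral_neg] at h2
    linarith
  linarith [hle.trans hint1]

lemma aux_klDiv_toReal {X : Type*} [MeasurableSpace X] {μ ν : Measure X}
    [IsProbabilityMeasure μ] [IsProbabilityMeasure ν]
    (hμν : μ ≪ ν) (h : Integrable (llr μ ν) μ) :
    (klDiv μ ν).toReal = ∫ x, llr μ ν x ∂μ ∧ klDiv μ ν ≠ ⊤ := by
  rw [klDiv, if_pos ⟨hμν, h⟩]
  exact ⟨ENNReal.toReal_ofReal (aux_integral_llr_nonneg hμν h), ENNReal.ofReal_ne_top⟩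

lemma aux_klDiv_self {X : Type*} [MeasurableSpace X] (μ : Measure X) [IsFiniteMeasure μ] :
    klDiv μ μ = 0 := by
  have h0 : llr μ μ =ᵐ[μ] 0 := by
    filter_upwards [Measure.rnDeriv_self μ] with x hx
    simp [llr, hx]
  have hint : Integrable (llr μ μ) μ := (integrable_zero _ _ _).congr h0.symm
  rw [klDiv, if_pos ⟨Measure.AbsolutelyContinuous.rfl, hint⟩, integral_congr_ae h0]
  simp

lemma aux_klDiv_finite {X : Type*} [MeasurableSpace X] {μ ν : Measure X}
    (h : klDiv μ ν < ⊤) : μ ≪ ν ∧ Integrable (llr μ ν) μ := by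
  by_contra hc
  rw [klDiv, if_neg hc] at h
  exact absurd h (by simp)

lemma aux_llr_sub {X : Type*} [MeasurableSpace X] {μ ν ξ : Measure X}
    [IsFiniteMeasure μ] [IsFiniteMeasure ν] [IsFiniteMeasure ξ]
    (hμν : μ ≪ ν) (hνξ : ν ≪ ξ) :
    llr μ ν =ᵐ[μ] fun x => llr μ ξ x - llr ν ξ x := by
  have hμξ := hμν.trans hνξ
  filter_upwards [hμξ.ae_le (Measure.rnDeriv_mul_rnDeriv hμν (κ := ξ)),
    Measure.rnDeriv_pos hμν, Measure.rnDeriv_lt_top μ ν |>.filter_mono hμν.ae_le,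
    (Measure.rnDeriv_pos hνξ).filter_mono hμν.ae_le,
    (Measure.rnDeriv_lt_top ν ξ).filter_mono hμξ.ae_le] with x h1 h2 h3 h4 h5
  have ha : 0 < (μ.rnDeriv ν x).toReal := ENNReal.toReal_pos h2.ne' h3.ne
  have hb : 0 < (ν.rnDeriv ξ x).toReal := ENNReal.toReal_pos h4.ne' h5.ne
  have hc : (μ.rnDeriv ξ x).toReal = (μ.rnDeriv ν x).toReal * (ν.rnDeriv ξ x).toReal := by
    rw [← ENNReal.toReal_mul]
    exact congrArg ENNReal.toReal h1.symm
  simp only [llr, hc, Real.log_mul ha.ne' hb.ne']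
  ring

/-- Recovery of the Arjovsky–Bottou gradient identity under the optimal discriminator:
the gradient of the negative GAN generator objective at `θ₀` equals the gradient of
`½·KL(p_{g_θ}‖p_data) − JSD(p_{g_θ}, p_data)` at `θ₀`. -/
theorem gan_generator_gradient_optimal_discriminator
    {X : Type*} [MeasurableSpace X] (β : Measure X) [IsProbabilityMeasure β]
    {d : ℕ} (θ₀ : EuclideanSpace ℝ (Fin d))
    (P : EuclideanSpace ℝ (Fin d) → Measure X) [∀ θ, IsProbabilityMeasure (P θ)]
    (r : X → ℝ) (hr_meas : Measurable r) (hr01 : ∀ x, r x ∈ Set.Ioo (0 : ℝ) 1)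
    (hr_rnDeriv : (fun x => ENNReal.ofReal (r x)) =ᵐ[P θ₀ + β] β.rnDeriv (P θ₀ + β))
    (ρ : Measure X) (hρ : ρ = (1 / 2 : ℝ≥0∞) • (P θ₀ + β))
    (hβac : β ≪ P θ₀) (hβkl : klDiv β (P θ₀) < ⊤)
    (hβint : Integrable (fun x => Real.log (1 - r x)) β)
    (hU : ∃ U ∈ nhds θ₀, ∀ θ ∈ U, P θ ≪ ρ ∧ klDiv (P θ) ρ < ⊤ ∧
      Integrable (fun x => Real.log (r x)) (P θ))
    (G : EuclideanSpace ℝ (Fin d) → ℝ)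
    (hG_def : G = fun θ => (1 / 2) * (klDiv (P θ) β).toReal - (JSD (P θ) β).toReal)
    (hG : DifferentiableAt ℝ G θ₀)
    (H : EuclideanSpace ℝ (Fin d) → ℝ)
    (hH_def : H = fun θ =>
      (klDiv ((1 / 2 : ℝ≥0∞) • P θ + (1 / 2 : ℝ≥0∞) • β) ρ).toReal)
    (hH : DifferentiableAt ℝ H θ₀)
    (F : EuclideanSpace ℝ (Fin d) → ℝ)
    (hF_def : F = fun θ => -((1 / 2) * ∫ x, Real.log (r x) ∂(P θ))
      - (1 / 2) * ∫ x, Real.log (1 - r x) ∂β) :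
    DifferentiableAt ℝ F θ₀ ∧ fderiv ℝ F θ₀ = fderiv ℝ G θ₀ := by
  obtain ⟨U, hUmem, hUprop⟩ := hU
  -- ρ is a probability measure
  have half_ne_top : (1/2 : ℝ≥0∞) ≠ ⊤ := by norm_num
  have half_ne_zero : (1/2 : ℝ≥0∞) ≠ 0 := by norm_num
  haveI hρprob : IsProbabilityMeasure ρ := by
    constructor
    rw [hρ, Measure.smul_apply, Measure.add_apply, measure_univ, measure_univ, smul_eq_mul]
    norm_num
    exact ENNReal.inv_mul_cancel two_ne_zero ENNReal.ofNat_ne_top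
  -- absolute continuity relations
  have hsum_ρ : (P θ₀ + β) ≪ ρ := by
    refine Measure.AbsolutelyContinuous.mk fun s hs h0 => ?_
    rw [hρ, Measure.smul_apply, smul_eq_mul, mul_eq_zero] at h0
    exact h0.resolve_left half_ne_zero
  have hρ_sum : ρ ≪ (P θ₀ + β) := by
    refine Measure.AbsolutelyContinuous.mk fun s hs h0 => ?_
    rw [hρ, Measure.smul_apply, smul_eq_mul, h0, mul_zero]
  have hβsum : β ≪ (P θ₀ + β) := by
    refine Measure.AbsolutelyContinuous.mk fun s hs h0 => ?_
    rw [Measure.add_apply, add_eq_zero] at h0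
    exact h0.2
  have hαsum : (P θ₀) ≪ (P θ₀ + β) := by
    refine Measure.AbsolutelyContinuous.mk fun s hs h0 => ?_
    rw [Measure.add_apply, add_eq_zero] at h0
    exact h0.1
  have hβρ : β ≪ ρ := hβsum.trans hsum_ρ
  have hαρ : (P θ₀) ≪ ρ := hαsum.trans hsum_ρ
  -- density of β with respect to ρ
  have hβd : β.rnDeriv ρ =ᵐ[ρ] fun x => ENNReal.ofReal (2 * r x) := by
    have h1 : β.rnDeriv ((1/2 : ℝ≥0∞) • (P θ₀ + β)) =ᵐ[P θ₀ + β]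
        (1/2 : ℝ≥0∞)⁻¹ • β.rnDeriv (P θ₀ + β) :=
      Measure.rnDeriv_smul_right_of_ne_top β (P θ₀ + β) half_ne_zero half_ne_top
    rw [← hρ] at h1
    refine hρ_sum.ae_le ?_
    filter_upwards [h1, hr_rnDeriv] with x h1x h2x
    rw [h1x, Pi.smul_apply, ← h2x, smul_eq_mul]
    rw [show ((1:ℝ≥0∞)/2)⁻¹ = 2 by
      rw [one_div, inv_inv], ENNReal.ofReal_mul (by norm_num : (0:ℝ) ≤ 2)]
    norm_num
  -- density of P θ₀ with respect to ρ
  have hαd : (P θ₀).rnDeriv ρ =ᵐ[ρ] fun x => ENNReal.ofReal (2 * (1 - r x)) := by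
    have hadd := Measure.rnDeriv_add (P θ₀) β (P θ₀ + β)
    have hself := Measure.rnDeriv_self (P θ₀ + β)
    have h1 : (P θ₀).rnDeriv ((1/2 : ℝ≥0∞) • (P θ₀ + β)) =ᵐ[P θ₀ + β]
        (1/2 : ℝ≥0∞)⁻¹ • (P θ₀).rnDeriv (P θ₀ + β) :=
      Measure.rnDeriv_smul_right_of_ne_top (P θ₀) (P θ₀ + β) half_ne_zero half_ne_top
    rw [← hρ] at h1
    refine hρ_sum.ae_le ?_
    filter_upwards [h1, hadd, hself, hr_rnDeriv] with x h1x h2x h3x h4x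
    have hsum : (P θ₀).rnDeriv (P θ₀ + β) x + ENNReal.ofReal (r x) = 1 := by
      rw [h4x, ← Pi.add_apply, ← h2x, h3x]
    have hval : (P θ₀).rnDeriv (P θ₀ + β) x = ENNReal.ofReal (1 - r x) := by
      rw [ENNReal.eq_sub_of_add_eq ENNReal.ofReal_ne_top hsum,
        ENNReal.ofReal_sub 1 (hr01 x).1.le, ENNReal.ofReal_one]
    rw [h1x, Pi.smul_apply, hval, smul_eq_mul,
      show ((1:ℝ≥0∞)/2)⁻¹ = 2 by rw [one_div, inv_inv],
      ENNReal.ofReal_mul (by norm_num : (0:ℝ) ≤ 2)]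
    norm_num
  -- ρ ≪ β
  have hρβ : ρ ≪ β := by
    refine Measure.AbsolutelyContinuous.mk fun s hs h0 => ?_
    have h1 : ∫⁻ x in s, β.rnDeriv ρ x ∂ρ = β s := Measure.setLIntegral_rnDeriv hβρ s
    have h2 : ∫⁻ x in s, ENNReal.ofReal (2 * r x) ∂ρ = 0 := by
      rw [← h0, ← h1]
      exact lintegral_congr_ae (ae_restrict_of_ae hβd.symm)
    have h3 : (fun x => ENNReal.ofReal (2 * r x)) =ᵐ[ρ.restrict s] 0 :=
      (lintegral_eq_zero_iff ((hr_meas.const_mul 2).ennreal_ofReal)).mp h2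
    rw [Filter.EventuallyEq, ae_iff] at h3
    have h4 : {x | ¬ ENNReal.ofReal (2 * r x) = (0 : X → ℝ≥0∞) x} = Set.univ := by
      ext x
      simp only [Set.mem_setOf_eq, Set.mem_univ, iff_true, Pi.zero_apply]
      have hpos : (0:ℝ) < 2 * r x := by have := (hr01 x).1; linarith
      exact (ENNReal.ofReal_pos.mpr hpos).ne'
    rw [h4, Measure.restrict_apply_univ] at h3
    exact h3
  -- llr representations with respect to ρ
  have hllr_βρ : llr β ρ =ᵐ[ρ] fun x => log (2 * r x) := by
    filter_upwards [hβd] with x hx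
    simp only [llr_def, hx]
    rw [ENNReal.toReal_ofReal (by have := (hr01 x).1; linarith)]
  have hllr_αρ : llr (P θ₀) ρ =ᵐ[ρ] fun x => log (2 * (1 - r x)) := by
    filter_upwards [hαd] with x hx
    simp only [llr_def, hx]
    rw [ENNReal.toReal_ofReal (by have := (hr01 x).2; linarith)]
  obtain ⟨_, hβint_llr⟩ := aux_klDiv_finite hβkl
  have hllr_βα : llr β (P θ₀) =ᵐ[β] fun x => log (r x) - log (1 - r x) := by
    filter_upwards [aux_llr_sub hβac hαρ, hβρ.ae_le hllr_βρ, hβρ.ae_le hllr_αρ] with x h1 h2 h3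
    have hne : (1:ℝ) - r x ≠ 0 := by have := (hr01 x).2; intro h; linarith
    rw [h1, h2, h3, Real.log_mul two_ne_zero (hr01 x).1.ne',
      Real.log_mul two_ne_zero hne]
    ring
  have hlogr_β : Integrable (fun x => log (r x)) β := by
    refine (hβint_llr.add hβint).congr ?_
    filter_upwards [hllr_βα] with x hx
    simp only [Pi.add_apply, hx]; ring
  have hKβα : ∫ x, llr β (P θ₀) x ∂β = (∫ x, log (r x) ∂β) - ∫ x, log (1 - r x) ∂β := by
    rw [integral_congr_ae hllr_βα, integral_sub hlogr_β hβint]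
  set C : ℝ := log 2 + (1/2) * ∫ x, llr β (P θ₀) x ∂β with hCdef
  -- key identity on U
  have key : ∀ θ ∈ U, F θ = G θ - H θ + C := by
    intro θ hθ
    obtain ⟨hac, hkl, hint⟩ := hUprop θ hθ
    obtain ⟨_, hIμρ⟩ := aux_klDiv_finite hkl
    set μ := P θ with hμdef
    haveI hμprob : IsProbabilityMeasure μ := inferInstanceAs (IsProbabilityMeasure (P θ))
    set m : Measure X := (1/2 : ℝ≥0∞) • μ + (1/2 : ℝ≥0∞) • β with hmdef
    haveI hm1 : IsFiniteMeasure ((1/2 : ℝ≥0∞) • μ) := ⟨by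
      rw [Measure.smul_apply, smul_eq_mul]
      exact ENNReal.mul_lt_top (by norm_num) (measure_lt_top μ _)⟩
    haveI hm2 : IsFiniteMeasure ((1/2 : ℝ≥0∞) • β) := ⟨by
      rw [Measure.smul_apply, smul_eq_mul]
      exact ENNReal.mul_lt_top (by norm_num) (measure_lt_top β _)⟩
    haveI hmprob : IsProbabilityMeasure m := ⟨by
      rw [hmdef, Measure.add_apply, Measure.smul_apply, Measure.smul_apply,
        measure_univ, measure_univ, smul_eq_mul, mul_one]
      exact ENNReal.add_halves 1⟩
    -- absolute continuity
    have hμβ : μ ≪ β := hac.trans hρβ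
    have hμm : μ ≪ m := by
      refine Measure.AbsolutelyContinuous.mk fun s hs h0 => ?_
      rw [hmdef, Measure.add_apply, add_eq_zero, Measure.smul_apply, smul_eq_mul,
        mul_eq_zero] at h0
      exact h0.1.resolve_left half_ne_zero
    have hβm : β ≪ m := by
      refine Measure.AbsolutelyContinuous.mk fun s hs h0 => ?_
      rw [hmdef, Measure.add_apply, add_eq_zero, Measure.smul_apply, Measure.smul_apply,
        smul_eq_mul, smul_eq_mul, mul_eq_zero, mul_eq_zero] at h0
      exact h0.2.resolve_left half_ne_zero
    have hmρ : m ≪ ρ := by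
      refine Measure.AbsolutelyContinuous.mk fun s hs h0 => ?_
      simp [hmdef, Measure.add_apply, Measure.smul_apply, hac h0, hβρ h0]
    -- density of m with respect to ρ
    have hg : m.rnDeriv ρ =ᵐ[ρ] fun x => (1/2 : ℝ≥0∞) * μ.rnDeriv ρ x + ENNReal.ofReal (r x) := by
      have h1 := Measure.rnDeriv_add ((1/2 : ℝ≥0∞) • μ) ((1/2 : ℝ≥0∞) • β) ρ
      have h2 := Measure.rnDeriv_smul_left_of_ne_top μ ρ half_ne_top
      have h3 := Measure.rnDeriv_smul_left_of_ne_top β ρ half_ne_top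
      rw [← hmdef] at h1
      filter_upwards [h1, h2, h3, hβd] with x h1x h2x h3x h4x
      rw [h1x, Pi.add_apply, h2x, h3x, Pi.smul_apply, Pi.smul_apply, h4x, smul_eq_mul,
        smul_eq_mul]
      congr 1
      rw [ENNReal.ofReal_mul (by norm_num : (0:ℝ) ≤ 2), show ENNReal.ofReal 2 = 2 by simp,
        ← mul_assoc, show (1/2 : ℝ≥0∞) * 2 = 1 by
          rw [one_div, ENNReal.inv_mul_cancel two_ne_zero ENNReal.ofNat_ne_top], one_mul]
    -- real-valued density facts
    have hgreal : ∀ᵐ x ∂ρ, (m.rnDeriv ρ x).toReal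
        = (1/2) * (μ.rnDeriv ρ x).toReal + r x ∧ 0 < (m.rnDeriv ρ x).toReal := by
      filter_upwards [hg, Measure.rnDeriv_lt_top μ ρ] with x h1 h2
      have hhalf : ((1/2 : ℝ≥0∞) * μ.rnDeriv ρ x) ≠ ⊤ := ENNReal.mul_ne_top half_ne_top h2.ne
      have heq : (m.rnDeriv ρ x).toReal = (1/2) * (μ.rnDeriv ρ x).toReal + r x := by
        rw [h1, ENNReal.toReal_add hhalf ENNReal.ofReal_ne_top, ENNReal.toReal_mul,
          ENNReal.toReal_ofReal (hr01 x).1.le]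
        norm_num
      refine ⟨heq, ?_⟩
      rw [heq]
      have h3 := (hr01 x).1
      have h4 := ENNReal.toReal_nonneg (a := μ.rnDeriv ρ x)
      linarith
    -- integrability of llr m ρ with respect to μ
    have hbound_μ : ∀ᵐ x ∂μ, |llr m ρ x| ≤ |log (r x)| + (log 2 + |llr μ ρ x|) := by
      filter_upwards [hac.ae_le hgreal, Measure.rnDeriv_pos hac,
        hac.ae_le (Measure.rnDeriv_lt_top μ ρ)] with x hx hpos htop
      obtain ⟨hxeq, hxpos⟩ := hx
      have hfr : 0 < (μ.rnDeriv ρ x).toReal := ENNReal.toReal_pos hpos.ne' htop.ne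
      have hrx := hr01 x
      have hlow : log (r x) ≤ llr m ρ x := by
        refine (Real.log_le_log_iff hrx.1 hxpos).mpr ?_
        rw [hxeq]; linarith [ENNReal.toReal_nonneg (a := μ.rnDeriv ρ x)]
      have hup : llr m ρ x ≤ log 2 + |llr μ ρ x| := by
        rcases le_total ((μ.rnDeriv ρ x).toReal) 2 with hc | hc
        · have h2' : (m.rnDeriv ρ x).toReal ≤ 2 := by rw [hxeq]; nlinarith [hrx.2]
          have := (Real.log_le_log_iff hxpos (by norm_num : (0:ℝ) < 2)).mpr h2'
          have habs := abs_nonneg (llr μ ρ x)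
          simp only [llr_def] at this habs ⊢
          linarith
        · have h2' : (m.rnDeriv ρ x).toReal ≤ (μ.rnDeriv ρ x).toReal := by
            rw [hxeq]; nlinarith [hrx.2]
          have hlog := (Real.log_le_log_iff hxpos hfr).mpr h2'
          have habs : log (μ.rnDeriv ρ x).toReal ≤ |llr μ ρ x| := le_abs_self _
          have hl2 : (0:ℝ) ≤ log 2 := Real.log_nonneg one_le_two
          simp only [llr_def] at hlog habs ⊢
          linarith
      rw [abs_le]
      constructor
      · have := neg_abs_le (log (r x))
        have habs := abs_nonneg (llr μ ρ x)
        have hl2 : (0:ℝ) ≤ log 2 := Real.log_nonneg one_le_two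
        linarith
      · have := abs_nonneg (log (r x))
        linarith
    have hIm_μ : Integrable (llr m ρ) μ := by
      refine Integrable.mono' (hint.abs.add ((integrable_const (log 2)).add hIμρ.abs))
        (stronglyMeasurable_llr m ρ).aestronglyMeasurable ?_
      simpa [Real.norm_eq_abs] using hbound_μ
    -- integrability of llr m ρ with respect to β
    have hf_int_β : Integrable (fun x => (μ.rnDeriv ρ x).toReal) β := by
      refine integrable_toReal_of_lintegral_ne_top
        (Measure.measurable_rnDeriv μ ρ).aemeasurable ?_
      have hle : ∫⁻ x, μ.rnDeriv ρ x ∂β ≤ ∫⁻ x, μ.rnDeriv ρ x ∂(P θ₀ + β) :=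
        lintegral_mono' (Measure.le_add_left le_rfl) le_rfl
      have h2 : (P θ₀ + β) = (2:ℝ≥0∞) • ρ := by
        rw [hρ, smul_smul, show (2:ℝ≥0∞) * (1/2) = 1 by
          rw [one_div, ENNReal.mul_inv_cancel two_ne_zero ENNReal.ofNat_ne_top], one_smul]
      rw [h2, lintegral_smul_measure] at hle
      exact (hle.trans_lt (ENNReal.mul_lt_top (by norm_num)
        (Measure.lintegral_rnDeriv_lt_top μ ρ))).ne
    have hbound_β : ∀ᵐ x ∂β, |llr m ρ x| ≤ |log (r x)| + (1/2) * (μ.rnDeriv ρ x).toReal := by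
      filter_upwards [hβρ.ae_le hgreal] with x hx
      obtain ⟨hxeq, hxpos⟩ := hx
      have hrx := hr01 x
      have hfnn := ENNReal.toReal_nonneg (a := μ.rnDeriv ρ x)
      have hlow : log (r x) ≤ llr m ρ x := by
        refine (Real.log_le_log_iff hrx.1 hxpos).mpr ?_
        rw [hxeq]; linarith
      have hup : llr m ρ x ≤ (1/2) * (μ.rnDeriv ρ x).toReal := by
        have h1 : llr m ρ x ≤ (m.rnDeriv ρ x).toReal - 1 := Real.log_le_sub_one_of_pos hxpos
        rw [hxeq] at h1; nlinarith [hrx.2]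
      rw [abs_le]
      constructor
      · have := neg_abs_le (log (r x)); linarith
      · have := abs_nonneg (log (r x)); linarith
    have hIm_β : Integrable (llr m ρ) β := by
      refine Integrable.mono' (hlogr_β.abs.add (hf_int_β.const_mul (1/2)))
        (stronglyMeasurable_llr m ρ).aestronglyMeasurable ?_
      simpa [Real.norm_eq_abs] using hbound_β
    -- llr identities
    have hllr_μβ : llr μ β =ᵐ[μ] fun x => llr μ ρ x - log (2 * r x) := by
      filter_upwards [aux_llr_sub hμβ hβρ, hac.ae_le hllr_βρ] with x h1 h2
      rw [h1, h2]
    have hllr_μm : llr μ m =ᵐ[μ] fun x => llr μ ρ x - llr m ρ x := aux_llr_sub hμm hmρ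
    have hllr_βm : llr β m =ᵐ[β] fun x => log (2 * r x) - llr m ρ x := by
      filter_upwards [aux_llr_sub hβm hmρ, hβρ.ae_le hllr_βρ] with x h1 h2
      rw [h1, h2]
    -- integrability of log (2 r)
    have hlog2r : ∀ (x:X), log (2 * r x) = log 2 + log (r x) := fun x =>
      Real.log_mul two_ne_zero (hr01 x).1.ne'
    have hint2r_μ : Integrable (fun x => log (2 * r x)) μ := by
      simp only [hlog2r]; exact (integrable_const _).add hint
    have hint2r_β : Integrable (fun x => log (2 * r x)) β := by
      simp only [hlog2r]; exact (integrable_const _).add hlogr_β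
    have hI_μβ : Integrable (llr μ β) μ := (hIμρ.sub hint2r_μ).congr hllr_μβ.symm
    have hI_μm : Integrable (llr μ m) μ := (hIμρ.sub hIm_μ).congr hllr_μm.symm
    have hI_βm : Integrable (llr β m) β := (hint2r_β.sub hIm_β).congr hllr_βm.symm
    have hIμhalf : Integrable (llr m ρ) ((1/2 : ℝ≥0∞) • μ) :=
      (integrable_smul_measure half_ne_zero half_ne_top).mpr hIm_μ
    have hIβhalf : Integrable (llr m ρ) ((1/2 : ℝ≥0∞) • β) :=
      (integrable_smul_measure half_ne_zero half_ne_top).mpr hIm_β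
    have hI_mρ : Integrable (llr m ρ) m := by
      rw [hmdef]; exact hIμhalf.add_measure hIβhalf
    -- integral identities
    have half_toReal : (1/2 : ℝ≥0∞).toReal = 1/2 := by simp
    have hEμβ : ∫ x, llr μ β x ∂μ
        = (∫ x, llr μ ρ x ∂μ) - (log 2 + ∫ x, log (r x) ∂μ) := by
      rw [integral_congr_ae hllr_μβ, integral_sub hIμρ hint2r_μ]
      congr 1
      simp only [hlog2r]
      rw [integral_add (integrable_const _) hint, integral_const]
      simp
    have hEμm : ∫ x, llr μ m x ∂μ = (∫ x, llr μ ρ x ∂μ) - ∫ x, llr m ρ x ∂μ := by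
      rw [integral_congr_ae hllr_μm, integral_sub hIμρ hIm_μ]
    have hEβm : ∫ x, llr β m x ∂β
        = (log 2 + ∫ x, log (r x) ∂β) - ∫ x, llr m ρ x ∂β := by
      rw [integral_congr_ae hllr_βm, integral_sub hint2r_β hIm_β]
      congr 1
      simp only [hlog2r]
      rw [integral_add (integrable_const _) hlogr_β, integral_const]
      simp
    have hEmρ : ∫ x, llr m ρ x ∂m
        = (1/2) * (∫ x, llr m ρ x ∂μ) + (1/2) * ∫ x, llr m ρ x ∂β := by
      have h := integral_add_measure hIμhalf hIβhalf
      rw [integral_smul_measure, integral_smul_measure, half_toReal, smul_eq_mul,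
        smul_eq_mul] at h
      exact h
    -- klDiv values
    have hKμβ := aux_klDiv_toReal hμβ hI_μβ
    have hKμm := aux_klDiv_toReal hμm hI_μm
    have hKβm := aux_klDiv_toReal hβm hI_βm
    have hKmρ := aux_klDiv_toReal hmρ hI_mρ
    have hJ : (JSD μ β).toReal
        = (1/2) * (klDiv μ m).toReal + (1/2) * (klDiv β m).toReal := by
      rw [JSD, ← hmdef,
        ENNReal.toReal_add (ENNReal.mul_ne_top (by norm_num) hKμm.2)
          (ENNReal.mul_ne_top (by norm_num) hKβm.2),
        ENNReal.toReal_mul, ENNReal.toReal_mul, half_toReal]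
    -- assemble
    simp only [hF_def, hG_def, hH_def]
    rw [← hμdef, ← hmdef, hJ, hKμβ.1, hKμm.1, hKβm.1, hKmρ.1, hEμβ, hEμm, hEβm, hEmρ,
      hCdef, hKβα]
    ring
  -- conclusion
  have hθ₀U : θ₀ ∈ U := mem_of_mem_nhds hUmem
  have hEq : F =ᶠ[nhds θ₀] fun θ => G θ - H θ + C :=
    Filter.eventually_of_mem hUmem fun θ hθ => key θ hθ
  have hH0 : H θ₀ = 0 := by
    rw [hH_def]
    simp only
    rw [show ((1/2 : ℝ≥0∞) • P θ₀ + (1/2 : ℝ≥0∞) • β) = ρ by rw [hρ, smul_add],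
      aux_klDiv_self ρ]
    simp
  have hHfderiv : fderiv ℝ H θ₀ = 0 := by
    have hmin : IsLocalMin H θ₀ := by
      refine Filter.Eventually.of_forall fun θ => ?_
      rw [hH0, hH_def]
      exact ENNReal.toReal_nonneg
    exact hmin.fderiv_eq_zero
  have hD : DifferentiableAt ℝ (fun θ => G θ - H θ + C) θ₀ := (hG.sub hH).add_const C
  refine ⟨hD.congr_of_eventuallyEq hEq, ?_⟩
  rw [hEq.fderiv_eq, fderiv_add_const, fderiv_fun_sub hG hH, hHfderiv, sub_zero]
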